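/- Let μ, λ be real numbers with μ > 0 and λ + μ > 0. Then the complex numbers s₁ = 1, s₂ = (λ+μ)/(λ+3μ), s₃ = −(λ+μ)/(λ+3μ), s₄ = i(λ+μ)/(λ+3μ), s₅ = i(λ+μ)/(λ+3μ) satisfy the following five equations: (i) s₁² = 1; (ii) 2s₁s₂ + s₂² + s₄s₅ − (i(λ+μ)/μ)s₅ − (λ+μ)/μ = 0; (iii) 2s₁s₃ + s₃² + s₄s₅ − (i(λ+μ)/(λ+2μ))s₄ + 1 − μ/(λ+2μ) = 0; (iv) 2s₁s₄ + s₂s₄ + s₃s₄ − (i(λ+μ)/μ)(s₁ + s₃) = 0; (v) 2s₁s₅ + s₂s₅ + s₃s₅ − (i(λ+μ)/(λ+2μ))(s₁ + s₂) = 0. -/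
import Mathlib


open Complex

/-- The explicit values `s₁,…,s₅` solve the five coefficient equations of the
principal-symbol equation for the factorization of the elastic Lamé operator. -/
theorem stmt1 (μ lam : ℝ) (hμ : 0 < μ) (hlam : 0 < lam + μ)
    (s₁ s₂ s₃ s₄ s₅ : ℂ)
    (h₁ : s₁ = 1)
    (h₂ : s₂ = ((lam : ℂ) + μ) / ((lam : ℂ) + 3 * μ))
    (h₃ : s₃ = -(((lam : ℂ) + μ) / ((lam : ℂ) + 3 * μ)))
    (h₄ : s₄ = Complex.I * ((lam : ℂ) + μ) / ((lam : ℂ) + 3 * μ))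
    (h₅ : s₅ = Complex.I * ((lam : ℂ) + μ) / ((lam : ℂ) + 3 * μ)) :
    s₁ ^ 2 = 1 ∧
    2 * s₁ * s₂ + s₂ ^ 2 + s₄ * s₅ - (Complex.I * ((lam : ℂ) + μ) / μ) * s₅
      - ((lam : ℂ) + μ) / μ = 0 ∧
    2 * s₁ * s₃ + s₃ ^ 2 + s₄ * s₅
      - (Complex.I * ((lam : ℂ) + μ) / ((lam : ℂ) + 2 * μ)) * s₄
      + 1 - (μ : ℂ) / ((lam : ℂ) + 2 * μ) = 0 ∧
    2 * s₁ * s₄ + s₂ * s₄ + s₃ * s₄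
      - (Complex.I * ((lam : ℂ) + μ) / μ) * (s₁ + s₃) = 0 ∧
    2 * s₁ * s₅ + s₂ * s₅ + s₃ * s₅
      - (Complex.I * ((lam : ℂ) + μ) / ((lam : ℂ) + 2 * μ)) * (s₁ + s₂) = 0 := by
  have hμ' : (μ:ℂ) ≠ 0 := by exact_mod_cast hμ.ne'
  have h3r : lam + 3*μ ≠ 0 := by nlinarith
  have h2r : lam + 2*μ ≠ 0 := by nlinarith
  have h3 : ((lam:ℂ) + 3*μ) ≠ 0 := by
    intro h; apply h3r; exact_mod_cast (by push_cast; exact h : ((lam + 3*μ : ℝ):ℂ) = 0)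
  have h2 : ((lam:ℂ) + 2*μ) ≠ 0 := by
    intro h; apply h2r; exact_mod_cast (by push_cast; exact h : ((lam + 2*μ : ℝ):ℂ) = 0)
  have hd : ((lam:ℂ) + 3*μ) * ((lam:ℂ) + 3*μ)⁻¹ = 1 := mul_inv_cancel₀ h3
  have he : ((lam:ℂ) + 2*μ) * ((lam:ℂ) + 2*μ)⁻¹ = 1 := mul_inv_cancel₀ h2
  have hm : (μ:ℂ) * (μ:ℂ)⁻¹ = 1 := mul_inv_cancel₀ hμ'
  subst h₁ h₂ h₃ h₄ h₅
  set A : ℂ := (lam:ℂ) + μ with hA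
  set u : ℂ := ((lam:ℂ) + 3*μ)⁻¹ with hu
  set v : ℂ := ((μ:ℂ))⁻¹ with hv
  set w : ℂ := ((lam:ℂ) + 2*μ)⁻¹ with hw
  refine ⟨by ring, ?_, ?_, ?_, ?_⟩
  · linear_combination (A^2*u^2 - A^2*u*v) * Complex.I_sq + (-2*A*u) * hm + (A*v) * hd
  · linear_combination (A^2*u^2 - A^2*u*w) * Complex.I_sq + (2*A*u - 1) * he + (-(A*w)) * hd
  · linear_combination (-2*Complex.I*A*u) * hm + (Complex.I*A*v) * hd
  · linear_combination (-2*Complex.I*A*u) * he + (Complex.I*A*w) * hd
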